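/- arXiv:2512.14240 — 4 statements merged into one kernel-verified Lean document; each statement's English description precedes it below -/
import Mathlib

section
/- Let f = (f_1,…,f_N) : ℝ^N → ℝ^N be Lipschitz continuous with Lipschitz constant L > 0 and let χ be a transition function. Define f̄ = (f̄_1,…,f̄_N) by f̄_n(u) = (max(f_n(u),0) − f_n(u))·χ(u_n) + f_n(u). Then f̄ satisfies the mass-control condition: for every choice of positive constants c_1,…,c_N, setting K_0 = Σ_{n=1}^N c_n·max(f_n(0),0) ≥ 0 and K_1 = L·√N·Σ_{n=1}^N c_n, one has Σ_{n=1}^N c_n f̄_n(u) ≤ K_0 + K_1·Σ_{n=1}^N u_n for all u ∈ ℝ^N with u_n ≥ 0 for every n. -/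
open scoped BigOperators ENNReal NNReal

/-- A transition function: smooth, equal to `1` below `ε - δ`, equal to `0` above `ε + δ`,
with strictly negative derivative in between, for some `0 < δ < ε`. -/
def IsTransitionFun (χ : ℝ → ℝ) : Prop :=
  ContDiff ℝ (⊤ : ℕ∞) χ ∧
  ∃ ε δ : ℝ, 0 < δ ∧ δ < ε ∧
    (∀ x : ℝ, x ≤ ε - δ → χ x = 1) ∧
    (∀ x : ℝ, ε + δ ≤ x → χ x = 0) ∧
    (∀ x : ℝ, ε - δ < x → x < ε + δ → deriv χ x < 0)

lemma transition_mem_Icc {χ : ℝ → ℝ} (hχ : IsTransitionFun χ) (x : ℝ) :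
    0 ≤ χ x ∧ χ x ≤ 1 := by
  obtain ⟨hs, ε, δ, hδ, hδε, h1, h0, hd⟩ := hχ
  have hcont : Continuous χ := hs.continuous
  have hanti : StrictAntiOn χ (Set.Icc (ε - δ) (ε + δ)) := by
    apply strictAntiOn_of_deriv_neg (convex_Icc _ _) hcont.continuousOn
    intro y hy
    rw [interior_Icc] at hy
    exact hd y hy.1 hy.2
  rcases le_or_gt x (ε - δ) with h | h
  · rw [h1 x h]; norm_num
  rcases le_or_gt (ε + δ) x with h' | h'
  · rw [h0 x h']; norm_num
  have hx : x ∈ Set.Icc (ε - δ) (ε + δ) := ⟨h.le, h'.le⟩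
  have hl : (ε - δ) ∈ Set.Icc (ε - δ) (ε + δ) := ⟨le_rfl, by linarith⟩
  have hr : (ε + δ) ∈ Set.Icc (ε - δ) (ε + δ) := ⟨by linarith, le_rfl⟩
  constructor
  · have := hanti hx hr h'
    rw [h0 (ε + δ) le_rfl] at this
    linarith
  · have := hanti hl hx h
    rw [h1 (ε - δ) le_rfl] at this
    linarith

/-- Mass control for the modified reaction term
`f̄_n(u) = (max(f_n(u),0) − f_n(u))·χ(u_n) + f_n(u)`: for positive weights `c_n`, with
`K₀ = Σ c_n·max(f_n(0),0)` and `K₁ = L·√N·Σ c_n`, one has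
`Σ c_n f̄_n(u) ≤ K₀ + K₁·Σ u_n` for all componentwise nonnegative `u`. -/
theorem modified_reaction_mass_control (N : ℕ)
    (f : EuclideanSpace ℝ (Fin N) → EuclideanSpace ℝ (Fin N))
    (L : ℝ) (hL : 0 < L)
    (hf : ∀ u v : EuclideanSpace ℝ (Fin N), ‖f u - f v‖ ≤ L * ‖u - v‖)
    (χ : ℝ → ℝ) (hχ : IsTransitionFun χ)
    (fbar : EuclideanSpace ℝ (Fin N) → EuclideanSpace ℝ (Fin N))
    (hfbar : ∀ (u : EuclideanSpace ℝ (Fin N)) (n : Fin N),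
      fbar u n = (max (f u n) 0 - f u n) * χ (u n) + f u n)
    (c : Fin N → ℝ) (hc : ∀ n, 0 < c n) :
    ∀ u : EuclideanSpace ℝ (Fin N), (∀ n, 0 ≤ u n) →
      ∑ n, c n * fbar u n ≤
        (∑ n, c n * max (f 0 n) 0) + (L * Real.sqrt N * ∑ n, c n) * ∑ n, u n := by
  intro u hu
  rcases Nat.eq_zero_or_pos N with hN | hN
  · subst hN; simp
  have hN1 : (1 : ℝ) ≤ Real.sqrt N := by
    rw [show (1:ℝ) = Real.sqrt 1 by simp]
    exact Real.sqrt_le_sqrt (by exact_mod_cast hN)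
  set S := ∑ n, u n with hS
  have hS0 : 0 ≤ S := Finset.sum_nonneg fun n _ => hu n
  -- ‖u‖ ≤ S
  have hsumsq : ∑ n, u n ^ 2 ≤ S ^ 2 := by
    have : ∀ n ∈ Finset.univ, u n ^ 2 ≤ u n * S := by
      intro n _
      rw [sq]
      exact mul_le_mul_of_nonneg_left
        (Finset.single_le_sum (fun i _ => hu i) (Finset.mem_univ n)) (hu n)
    calc ∑ n, u n ^ 2 ≤ ∑ n, u n * S := Finset.sum_le_sum this
      _ = S * S := by rw [← Finset.sum_mul]
      _ = S ^ 2 := (sq S).symm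
  have hnormu : ‖u‖ ≤ S := by
    rw [EuclideanSpace.norm_eq]
    have : ∑ n, ‖u n‖ ^ 2 = ∑ n, u n ^ 2 := by
      apply Finset.sum_congr rfl
      intro n _
      rw [Real.norm_eq_abs, sq_abs]
    rw [this]
    calc Real.sqrt (∑ n, u n ^ 2) ≤ Real.sqrt (S ^ 2) := Real.sqrt_le_sqrt hsumsq
      _ = S := Real.sqrt_sq hS0
  -- componentwise bound
  have key : ∀ n : Fin N, fbar u n ≤ max (f 0 n) 0 + L * Real.sqrt N * S := by
    intro n
    obtain ⟨hχ0, hχ1⟩ := transition_mem_Icc hχ (u n)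
    have h1 : fbar u n ≤ max (f u n) 0 := by
      rw [hfbar u n]
      nlinarith [le_max_left (f u n) 0, le_max_right (f u n) 0]
    have habs : |f u n - f 0 n| ≤ L * ‖u‖ := by
      have hcomp : |(f u - f 0) n| ≤ ‖f u - f 0‖ := by
        rw [EuclideanSpace.norm_eq]
        have : |(f u - f 0) n| = Real.sqrt (((f u - f 0) n) ^ 2) := by
          rw [Real.sqrt_sq_eq_abs]
        rw [this]
        apply Real.sqrt_le_sqrt
        have := Finset.single_le_sum (f := fun i => ‖(f u - f 0) i‖ ^ 2)
          (fun i _ => sq_nonneg _) (Finset.mem_univ n)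
        simpa [Real.norm_eq_abs, sq_abs] using this
      have : ‖f u - f 0‖ ≤ L * ‖u - 0‖ := hf u 0
      rw [sub_zero] at this
      have heq : (f u - f 0) n = f u n - f 0 n := rfl
      rw [heq] at hcomp
      linarith
    have h2 : max (f u n) 0 ≤ max (f 0 n) 0 + |f u n - f 0 n| := by
      rcases abs_sub_abs_le_abs_sub (f u n) (f 0 n) with h
      rcases le_total (f u n) 0 with hfu | hfu
      · have : max (f u n) 0 = 0 := max_eq_right hfu
        rw [this]
        positivity
      · rw [max_eq_left hfu]
        have := abs_sub_abs_le_abs_sub (f u n) (f 0 n)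
        have h3 : f u n ≤ f 0 n + |f u n - f 0 n| := by
          have := le_abs_self (f u n - f 0 n)
          linarith
        calc f u n ≤ f 0 n + |f u n - f 0 n| := h3
          _ ≤ max (f 0 n) 0 + |f u n - f 0 n| := by
              gcongr; exact le_max_left _ _
    have h4 : L * ‖u‖ ≤ L * Real.sqrt N * S := by
      calc L * ‖u‖ ≤ L * S := by gcongr
        _ ≤ L * Real.sqrt N * S := by
          have : L ≤ L * Real.sqrt N := by nlinarith
          exact mul_le_mul_of_nonneg_right this hS0
    linarith
  calc ∑ n, c n * fbar u n
      ≤ ∑ n, c n * (max (f 0 n) 0 + L * Real.sqrt N * S) := by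
        apply Finset.sum_le_sum
        intro n _
        exact mul_le_mul_of_nonneg_left (key n) (hc n).le
    _ = (∑ n, c n * max (f 0 n) 0) + (L * Real.sqrt N * ∑ n, c n) * S := by
        simp only [Finset.mul_sum, mul_add, Finset.sum_add_distrib]
        congr 1
        rw [Finset.sum_mul]
        apply Finset.sum_congr rfl; intro n _; ring
end

section
/- Let N ∈ ℕ, let Ω ⊆ [0,∞)^N be measurable with ∂[0,∞)^N ∩ ∂Ω ≠ ∅, fix a norm-induced metric D on ℝ^N, and for ε > 0 set Γ_ε := {x ∈ cl(Ω) : D(x, ∂[0,∞)^N ∩ ∂Ω) < ε}. Let f : Ω → ℝ be continuous, uniformly continuous on Γ_s for some s > 0, and strongly quasipositive (f(x) ≥ 0 for all x ∈ ∂[0,∞)^N ∩ ∂Ω, where f is continuously extended to cl(Ω)). Let (f_n)_n ⊆ C(cl(Ω), ℝ) converge to f uniformly on Ω. Let (ε_n)_n, (δ_n)_n be positive monotone sequences converging to 0 with 0 < δ_n < ε_n, and for each n let χ_n : cl(Ω) → [0,1] be a continuous function equal to 1 on Γ_{ε_n − δ_n} and equal to 0 on cl(Ω) \ Γ_{ε_n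 + δ_n}. Define f_{n,ε_n,δ_n} := max(f_n, 0)·χ_n + f_n·(1 − χ_n). Then each f_{n,ε_n,δ_n} is continuous on cl(Ω) and strongly quasipositive, and f_{n,ε_n,δ_n} → f uniformly on Ω as n → ∞. -/
open Filter

lemma nu_norm_bound (N : ℕ) (ν : (Fin N → ℝ) → ℝ)
    (hν0 : ∀ x, ν x = 0 ↔ x = 0)
    (hνsmul : ∀ (a : ℝ) (x), ν (a • x) = |a| * ν x)
    (hνadd : ∀ x y, ν (x + y) ≤ ν x + ν y) :
    ∃ C > 0, ∀ v : Fin N → ℝ, ‖v‖ ≤ C * ν v := by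
  have hν00 : ν 0 = 0 := (hν0 0).mpr rfl
  have hneg : ∀ x, ν (-x) = ν x := by
    intro x
    have := hνsmul (-1) x
    simpa using this
  have hnonneg : ∀ x, 0 ≤ ν x := by
    intro x
    have h := hνadd x (-x)
    rw [add_neg_cancel, hν00, hneg] at h
    linarith
  -- upper bound: ν x ≤ K * ‖x‖
  set K : ℝ := ∑ i : Fin N, ν (Pi.single i 1) with hK
  have hsum : ∀ (t : Finset (Fin N)) (g : Fin N → (Fin N → ℝ)),
      ν (∑ i ∈ t, g i) ≤ ∑ i ∈ t, ν (g i) := by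
    intro t g
    induction t using Finset.induction with
    | empty => simp [hν00]
    | insert _ _ hnot ih =>
      rw [Finset.sum_insert hnot, Finset.sum_insert hnot]
      exact le_trans (hνadd _ _) (by linarith [ih])
  have hupper : ∀ x, ν x ≤ K * ‖x‖ := by
    intro x
    have hx : x = ∑ i : Fin N, x i • (Pi.single i (1:ℝ) : Fin N → ℝ) := by
      funext j
      simp [Finset.sum_apply, Pi.single_apply, Finset.sum_ite_eq]
    calc ν x ≤ ∑ i : Fin N, ν (x i • (Pi.single i (1:ℝ) : Fin N → ℝ)) := by
          conv_lhs => rw [hx]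
          exact hsum _ _
      _ = ∑ i : Fin N, |x i| * ν (Pi.single i 1) := by simp [hνsmul]
      _ ≤ ∑ i : Fin N, ‖x‖ * ν (Pi.single i 1) := by
          apply Finset.sum_le_sum
          intro i _
          exact mul_le_mul_of_nonneg_right (by simpa using norm_le_pi_norm x i) (hnonneg _)
      _ = K * ‖x‖ := by rw [hK, Finset.sum_mul]; ring_nf
  have hcont : Continuous ν := by
    have hlip : LipschitzWith (Real.toNNReal K) ν := by
      apply LipschitzWith.of_dist_le_mul
      intro x y
      have h1 : ν x ≤ ν (x - y) + ν y := by
        have := hνadd (x - y) y; simpa using this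
      have h2 : ν y ≤ ν (x - y) + ν x := by
        have := hνadd (y - x) x
        have h3 : ν (y - x) = ν (x - y) := by rw [← hneg (x-y)]; ring_nf
        simp at this
        linarith [this]
      have h4 : ν (x - y) ≤ K * ‖x - y‖ := hupper _
      rw [Real.dist_eq, dist_eq_norm]
      have hKnn : (0:ℝ) ≤ K := Finset.sum_nonneg fun i _ => hnonneg _
      rw [Real.coe_toNNReal K hKnn]
      rw [abs_le]
      constructor <;> linarith
    exact hlip.continuous
  by_cases hN : ∃ v : Fin N → ℝ, v ≠ 0
  · obtain ⟨v₀, hv₀⟩ := hN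
    have hsph : (Metric.sphere (0 : Fin N → ℝ) 1).Nonempty := by
      refine ⟨‖v₀‖⁻¹ • v₀, ?_⟩
      simp [norm_smul, norm_ne_zero_iff.mpr hv₀,
        inv_mul_cancel₀ (norm_ne_zero_iff.mpr hv₀)]
    obtain ⟨w, hw, hwmin⟩ := (isCompact_sphere (0 : Fin N → ℝ) 1).exists_isMinOn hsph
      hcont.continuousOn
    have hwn : ‖w‖ = 1 := by simpa using hw
    have hwpos : 0 < ν w := by
      rcases lt_or_eq_of_le (hnonneg w) with h | h
      · exact h
      · exfalso
        have := (hν0 w).mp h.symm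
        rw [this] at hwn; simp at hwn
    refine ⟨(ν w)⁻¹, by positivity, ?_⟩
    intro v
    by_cases hv : v = 0
    · simp [hv, hν00]
    · have hvn : ‖v‖ ≠ 0 := norm_ne_zero_iff.mpr hv
      have hmem : ‖v‖⁻¹ • v ∈ Metric.sphere (0 : Fin N → ℝ) 1 := by
        simp [norm_smul, inv_mul_cancel₀ hvn]
      have := hwmin hmem
      have h2 : ν (‖v‖⁻¹ • v) = ‖v‖⁻¹ * ν v := by
        rw [hνsmul]; congr 1; rw [abs_of_nonneg]; positivity
      simp only [IsMinOn, Set.mem_setOf_eq] at this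
      have h3 : ν w ≤ ‖v‖⁻¹ * ν v := by rw [← h2]; exact this
      have hvpos : 0 < ‖v‖ := norm_pos_iff.mpr hv
      rw [inv_mul_eq_div, le_div_iff₀ hwpos]
      have h4 := mul_le_mul_of_nonneg_left h3 hvpos.le
      rw [← mul_assoc, mul_inv_cancel₀ (ne_of_gt hvpos), one_mul] at h4
      linarith
  · push_neg at hN
    refine ⟨1, one_pos, fun v => ?_⟩
    rw [hN v]; simp [hν00]




open scoped BigOperators ENNReal NNReal
open MeasureTheory Filter

/-- Uniform approximation of strongly quasipositive functions: given a norm-induced metric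
`D(x,y) = ν(x − y)` on `ℝ^N`, `B = ∂[0,∞)^N ∩ ∂Ω`, boundary layers
`Γ_ε = {x ∈ cl(Ω) : D(x,B) < ε}`, a strongly quasipositive `f` uniformly continuous near the
boundary, and uniform approximants `f_n`, the modifications
`f_{n,ε_n,δ_n} = max(f_n,0)·χ_n + f_n·(1 − χ_n)` are continuous, strongly quasipositive and
converge to `f` uniformly on `Ω`. -/
theorem strongly_quasipositive_uniform_approx (N : ℕ)
    (ν : (Fin N → ℝ) → ℝ)
    (hν0 : ∀ x, ν x = 0 ↔ x = 0)
    (hνsmul : ∀ (a : ℝ) (x), ν (a • x) = |a| * ν x)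
    (hνadd : ∀ x y, ν (x + y) ≤ ν x + ν y)
    (Ω : Set (Fin N → ℝ)) (hΩmeas : MeasurableSet Ω)
    (hΩpos : Ω ⊆ {x | ∀ i, 0 ≤ x i})
    (B : Set (Fin N → ℝ))
    (hB : B = frontier {x : Fin N → ℝ | ∀ i, 0 ≤ x i} ∩ frontier Ω)
    (hBne : B.Nonempty)
    (dB : (Fin N → ℝ) → ℝ) (hdB : ∀ x, dB x = ⨅ a : B, ν (x - (a : Fin N → ℝ)))
    (Γ : ℝ → Set (Fin N → ℝ)) (hΓ : ∀ ε : ℝ, Γ ε = {x ∈ closure Ω | dB x < ε})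
    (f : (Fin N → ℝ) → ℝ)
    (hfc : ContinuousOn f (closure Ω))
    (s : ℝ) (hs : 0 < s)
    (hfu : UniformContinuousOn f (Γ s))
    (hfq : ∀ x ∈ B, 0 ≤ f x)
    (F : ℕ → (Fin N → ℝ) → ℝ)
    (hFc : ∀ n, ContinuousOn (F n) (closure Ω))
    (hFconv : TendstoUniformlyOn F f atTop Ω)
    (ε δ : ℕ → ℝ)
    (hpos : ∀ n, 0 < δ n ∧ δ n < ε n)
    (hεmono : Antitone ε) (hδmono : Antitone δ)
    (hε0 : Tendsto ε atTop (nhds 0)) (hδ0 : Tendsto δ atTop (nhds 0))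
    (χ : ℕ → (Fin N → ℝ) → ℝ)
    (hχc : ∀ n, ContinuousOn (χ n) (closure Ω))
    (hχ01 : ∀ n, ∀ x ∈ closure Ω, χ n x ∈ Set.Icc (0 : ℝ) 1)
    (hχ1 : ∀ n, ∀ x ∈ Γ (ε n - δ n), χ n x = 1)
    (hχ0 : ∀ n, ∀ x ∈ closure Ω \ Γ (ε n + δ n), χ n x = 0)
    (G : ℕ → (Fin N → ℝ) → ℝ)
    (hG : ∀ n x, G n x = max (F n x) 0 * χ n x + F n x * (1 - χ n x)) :
    (∀ n, ContinuousOn (G n) (closure Ω)) ∧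
    (∀ n, ∀ x ∈ B, 0 ≤ G n x) ∧
    TendstoUniformlyOn G f atTop Ω := by
  
  -- basic facts about ν
  have hν00 : ν 0 = 0 := (hν0 0).mpr rfl
  have hneg : ∀ x, ν (-x) = ν x := by
    intro x; have := hνsmul (-1) x; simpa using this
  have hnonneg : ∀ x, 0 ≤ ν x := by
    intro x
    have h := hνadd x (-x)
    rw [add_neg_cancel, hν00, hneg] at h
    linarith
  obtain ⟨C, hC, hCnorm⟩ := nu_norm_bound N ν hν0 hνsmul hνadd
  haveI : Nonempty B := hBne.to_subtype
  have hbdd : ∀ x : Fin N → ℝ, BddBelow (Set.range fun a : B => ν (x - (a : Fin N → ℝ))) :=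
    fun x => ⟨0, by rintro y ⟨a, rfl⟩; exact hnonneg _⟩
  have hdBB : ∀ b ∈ B, dB b ≤ 0 := by
    intro b hb
    rw [hdB]
    have := ciInf_le (hbdd b) (⟨b, hb⟩ : B)
    simpa [hν00] using this
  have hBclos : B ⊆ closure Ω := by
    rw [hB]; exact fun x hx => frontier_subset_closure hx.2
  -- Part 1: continuity
  have part1 : ∀ n, ContinuousOn (G n) (closure Ω) := by
    intro n
    have hGn : G n = fun x => max (F n x) 0 * χ n x + F n x * (1 - χ n x) :=
      funext (hG n)
    rw [hGn]
    exact (((hFc n).sup continuousOn_const).mul (hχc n)).add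
      ((hFc n).mul (continuousOn_const.sub (hχc n)))
  -- Part 2: strong quasipositivity
  have part2 : ∀ n, ∀ x ∈ B, 0 ≤ G n x := by
    intro n x hx
    have hxΓ : x ∈ Γ (ε n - δ n) := by
      rw [hΓ]
      refine ⟨hBclos hx, ?_⟩
      have := hdBB x hx
      have hεδ := (hpos n)
      linarith [hεδ.1, hεδ.2]
    rw [hG, hχ1 n x hxΓ]
    simp [le_max_right]
  refine ⟨part1, part2, ?_⟩
  -- Part 3: uniform convergence
  rw [Metric.tendstoUniformlyOn_iff]
  intro η hη
  set η3 : ℝ := η / 3 with hη3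
  have hη3pos : 0 < η3 := by positivity
  obtain ⟨d, hd, hdu⟩ := (Metric.uniformContinuousOn_iff.mp hfu) η3 hη3pos
  have h1 := (Metric.tendstoUniformlyOn_iff.mp hFconv) η3 hη3pos
  have hsum0 : Tendsto (fun n => ε n + δ n) atTop (nhds 0) := by
    have := hε0.add hδ0
    simpa using this
  have hb : (0:ℝ) < min s (d / C) := lt_min hs (by positivity)
  have h2 : ∀ᶠ n in atTop, ε n + δ n < min s (d / C) :=
    hsum0.eventually_lt_const hb
  filter_upwards [h1, h2] with n hn1 hn2
  intro x hx
  have hxcl : x ∈ closure Ω := subset_closure hx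
  have hF := hn1 x hx
  by_cases hxΓ : x ∈ Γ (ε n + δ n)
  · -- near the boundary
    have hdBx : dB x < ε n + δ n := by
      rw [hΓ] at hxΓ; exact hxΓ.2
    rw [hdB] at hdBx
    obtain ⟨a, ha⟩ := exists_lt_of_ciInf_lt hdBx
    have haB : (a : Fin N → ℝ) ∈ B := a.2
    have hdist : dist x (a : Fin N → ℝ) < d := by
      rw [dist_eq_norm]
      calc ‖x - (a : Fin N → ℝ)‖ ≤ C * ν (x - a) := hCnorm _
        _ < C * (ε n + δ n) := by
            apply mul_lt_mul_of_pos_left _ hC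
            exact ha
        _ ≤ C * (d / C) := by
            apply mul_le_mul_of_nonneg_left _ hC.le
            exact (le_min_iff.mp hn2.le).2
        _ = d := by field_simp
    have hxΓs : x ∈ Γ s := by
      rw [hΓ]
      refine ⟨hxcl, ?_⟩
      have : dB x < ε n + δ n := by rw [hdB]; exact hdBx
      exact lt_of_lt_of_le this (le_of_lt (lt_of_lt_of_le hn2 (min_le_left _ _)))
    have haΓs : (a : Fin N → ℝ) ∈ Γ s := by
      rw [hΓ]
      exact ⟨hBclos haB, lt_of_le_of_lt (hdBB _ haB) hs⟩
    have hfclose : dist (f x) (f a) < η3 := hdu x hxΓs a haΓs hdist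
    have hfa : 0 ≤ f (a : Fin N → ℝ) := hfq _ haB
    -- F n x > -2η3
    have hFx : -(2 * η3) < F n x := by
      rw [Real.dist_eq] at hF hfclose
      rw [abs_lt] at hF hfclose
      linarith [hF.1, hF.2, hfclose.1, hfclose.2]
    have hc := hχ01 n x hxcl
    have ht0 : 0 ≤ max (F n x) 0 - F n x := by
      have := le_max_left (F n x) 0; linarith
    have ht2 : max (F n x) 0 - F n x < 2 * η3 := by
      rcases le_or_gt 0 (F n x) with h | h
      · rw [max_eq_left h]; linarith
      · rw [max_eq_right h.le]; linarith
    have hGeq : G n x = F n x + χ n x * (max (F n x) 0 - F n x) := by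
      rw [hG]; ring
    have hct : χ n x * (max (F n x) 0 - F n x) < 2 * η3 ∧
        0 ≤ χ n x * (max (F n x) 0 - F n x) := by
      constructor
      · calc χ n x * (max (F n x) 0 - F n x) ≤ 1 * (max (F n x) 0 - F n x) :=
              mul_le_mul_of_nonneg_right hc.2 ht0
          _ < 2 * η3 := by linarith
      · exact mul_nonneg hc.1 ht0
    rw [Real.dist_eq, hGeq]
    rw [Real.dist_eq, abs_lt] at hF
    rw [abs_lt]
    constructor <;> [linarith [hF.1, hct.1]; linarith [hF.2, hct.2]]
  · -- away from the boundary: χ = 0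
    have hχx : χ n x = 0 := hχ0 n x ⟨hxcl, hxΓ⟩
    have : G n x = F n x := by rw [hG, hχx]; ring
    rw [this]
    calc dist (f x) (F n x) < η3 := hF
      _ < η := by linarith
end

section
/- Let N ∈ ℕ, let Ω ⊆ [0,∞)^N be measurable with ∂[0,∞)^N ∩ ∂Ω ≠ ∅, fix a norm-induced metric D on ℝ^N, and for ε > 0 set Γ_ε := {x ∈ cl(Ω) : D(x, ∂[0,∞)^N ∩ ∂Ω) < ε}. Let 1 ≤ p < ∞ and let f : Ω → ℝ be continuous with ‖f‖_{L^p(Ω)} < ∞; assume f is uniformly bounded on Γ_s for some s > 0 with Lebesgue measure |Γ_s| < ∞, and assume there exists φ : [0,s) → ℝ, right-continuous at 0 with φ(0) = 0, such that |Γ_x| ≤ φ(x) for all 0 ≤ x < s. Assume f is strongly quasipositive, and let (f_n)_n ⊆ C(cl(Ω), ℝ) converge to f in L^p(Ω). Let (ε_n)_n, (δ_n)_n be positive monotone sequences converging to 0 with 0 < δ_n < ε_n, and for each n let χ_n : cl(Ω) → [0,1] be continuous, equal to 1 on Γ_{ε_n − δ_n} and equal to 0 on cl(Ω) \ Γ_{ε_n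 + δ_n}. Define f_{n,ε_n,δ_n} := max(f_n, 0)·χ_n + f_n·(1 − χ_n). Then each f_{n,ε_n,δ_n} is continuous on cl(Ω) and strongly quasipositive, and f_{n,ε_n,δ_n} → f in L^p(Ω) as n → ∞. -/
open scoped BigOperators ENNReal NNReal
open MeasureTheory Filter

private lemma nu_sum_le {α : Type*} {N : ℕ} (ν : (Fin N → ℝ) → ℝ)
    (h0 : ν 0 = 0) (hadd : ∀ x y, ν (x + y) ≤ ν x + ν y)
    (s : Finset α) (g : α → (Fin N → ℝ)) :
    ν (∑ i ∈ s, g i) ≤ ∑ i ∈ s, ν (g i) := by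
  classical
  induction s using Finset.induction_on with
  | empty => simp [h0]
  | insert _ _ h ih =>
    rw [Finset.sum_insert h, Finset.sum_insert h]
    exact (hadd _ _).trans (by linarith)

/-- `L^p` approximation of strongly quasipositive functions: under the boundary-layer
measure control `|Γ_x| ≤ φ(x)` with `φ` right-continuous at `0`, `φ(0) = 0`, uniform
boundedness of `f` near the boundary and `L^p`-approximants `f_n`, the modifications
`f_{n,ε_n,δ_n} = max(f_n,0)·χ_n + f_n·(1 − χ_n)` are continuous, strongly quasipositive and
converge to `f` in `L^p(Ω)`. -/
theorem strongly_quasipositive_Lp_approx (N : ℕ)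
    (ν : (Fin N → ℝ) → ℝ)
    (hν0 : ∀ x, ν x = 0 ↔ x = 0)
    (hνsmul : ∀ (a : ℝ) (x), ν (a • x) = |a| * ν x)
    (hνadd : ∀ x y, ν (x + y) ≤ ν x + ν y)
    (Ω : Set (Fin N → ℝ)) (hΩmeas : MeasurableSet Ω)
    (hΩpos : Ω ⊆ {x | ∀ i, 0 ≤ x i})
    (B : Set (Fin N → ℝ))
    (hB : B = frontier {x : Fin N → ℝ | ∀ i, 0 ≤ x i} ∩ frontier Ω)
    (hBne : B.Nonempty)
    (dB : (Fin N → ℝ) → ℝ) (hdB : ∀ x, dB x = ⨅ a : B, ν (x - (a : Fin N → ℝ)))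
    (Γ : ℝ → Set (Fin N → ℝ)) (hΓ : ∀ ε : ℝ, Γ ε = {x ∈ closure Ω | dB x < ε})
    (p : ℝ≥0∞) (hp1 : 1 ≤ p) (hptop : p ≠ ⊤)
    (f : (Fin N → ℝ) → ℝ)
    (hfc : ContinuousOn f (closure Ω))
    (hfLp : eLpNorm f p (volume.restrict Ω) < ⊤)
    (s : ℝ) (hs : 0 < s)
    (hfbd : ∃ M : ℝ, ∀ x ∈ Γ s, |f x| ≤ M)
    (hΓsfin : volume (Γ s) < ⊤)
    (φ : ℝ → ℝ) (hφ0 : φ 0 = 0)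
    (hφrc : ContinuousWithinAt φ (Set.Ici 0) 0)
    (hφ : ∀ x : ℝ, 0 ≤ x → x < s → (volume (Γ x)).toReal ≤ φ x)
    (hfq : ∀ x ∈ B, 0 ≤ f x)
    (F : ℕ → (Fin N → ℝ) → ℝ)
    (hFc : ∀ n, ContinuousOn (F n) (closure Ω))
    (hFconv : Tendsto (fun n => eLpNorm (fun x => F n x - f x) p (volume.restrict Ω))
      atTop (nhds 0))
    (ε δ : ℕ → ℝ)
    (hpos : ∀ n, 0 < δ n ∧ δ n < ε n)
    (hεmono : Antitone ε) (hδmono : Antitone δ)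
    (hε0 : Tendsto ε atTop (nhds 0)) (hδ0 : Tendsto δ atTop (nhds 0))
    (χ : ℕ → (Fin N → ℝ) → ℝ)
    (hχc : ∀ n, ContinuousOn (χ n) (closure Ω))
    (hχ01 : ∀ n, ∀ x ∈ closure Ω, χ n x ∈ Set.Icc (0 : ℝ) 1)
    (hχ1 : ∀ n, ∀ x ∈ Γ (ε n - δ n), χ n x = 1)
    (hχ0 : ∀ n, ∀ x ∈ closure Ω \ Γ (ε n + δ n), χ n x = 0)
    (G : ℕ → (Fin N → ℝ) → ℝ)
    (hG : ∀ n x, G n x = max (F n x) 0 * χ n x + F n x * (1 - χ n x)) :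
    (∀ n, ContinuousOn (G n) (closure Ω)) ∧
    (∀ n, ∀ x ∈ B, 0 ≤ G n x) ∧
    Tendsto (fun n => eLpNorm (fun x => G n x - f x) p (volume.restrict Ω))
      atTop (nhds 0) := by
  classical
  haveI : Nonempty B := hBne.to_subtype
  -- basic properties of ν
  have hν00 : ν 0 = 0 := (hν0 0).mpr rfl
  have hνneg : ∀ x, ν (-x) = ν x := by
    intro x
    have := hνsmul (-1) x
    simpa using this
  have hνnonneg : ∀ x, 0 ≤ ν x := by
    intro x
    have h := hνadd x (-x)
    rw [add_neg_cancel, hν00, hνneg] at h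
    linarith
  have hνle : ∀ x y, |ν x - ν y| ≤ ν (x - y) := by
    intro x y
    have h1 : ν x ≤ ν (x - y) + ν y := by
      have := hνadd (x - y) y
      simpa [sub_add_cancel] using this
    have h2 : ν y ≤ ν (x - y) + ν x := by
      have := hνadd (y - x) x
      have hyx : ν (y - x) = ν (x - y) := by
        rw [← hνneg (x - y), neg_sub]
      rw [hyx] at this
      simpa [sub_add_cancel] using this
    rw [abs_sub_le_iff]
    constructor <;> linarith
  -- ν is dominated by a continuous function of the coordinates
  set e : Fin N → (Fin N → ℝ) := fun i => fun j => if i = j then (1 : ℝ) else 0 with he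
  have hνx : ∀ x : Fin N → ℝ, ν x ≤ ∑ i, |x i| * ν (e i) := by
    intro x
    calc ν x = ν (∑ i, x i • e i) := by rw [← pi_eq_sum_univ x]
      _ ≤ ∑ i, ν (x i • e i) := nu_sum_le ν hν00 hνadd _ _
      _ = ∑ i, |x i| * ν (e i) := by simp [hνsmul]
  have hνcont : Continuous ν := by
    rw [continuous_iff_continuousAt]
    intro x₀
    have hgc : Continuous (fun x : Fin N → ℝ => ∑ i, |x i - x₀ i| * ν (e i)) := by
      exact continuous_finset_sum _ fun i _ =>
        (((continuous_apply i).sub continuous_const).abs).mul continuous_const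
    have hg0 : (fun x : Fin N → ℝ => ∑ i, |x i - x₀ i| * ν (e i)) x₀ = 0 := by simp
    have key : Tendsto (fun x => ν x - ν x₀) (nhds x₀) (nhds 0) := by
      apply squeeze_zero_norm (a := fun x => ∑ i, |x i - x₀ i| * ν (e i))
      · intro x
        have := (hνle x x₀).trans (hνx (x - x₀))
        simpa using this
      · simpa [hg0] using hgc.tendsto x₀
    have := key.add (tendsto_const_nhds (x := ν x₀))
    simpa [ContinuousAt] using this
  -- distance to B
  have hBdd : ∀ x, BddBelow (Set.range fun a : B => ν (x - (a : Fin N → ℝ))) := by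
    intro x
    exact ⟨0, by rintro _ ⟨a, rfl⟩; exact hνnonneg _⟩
  have hdBle : ∀ x, ∀ a ∈ B, dB x ≤ ν (x - a) := by
    intro x a ha
    rw [hdB]
    exact ciInf_le (hBdd x) ⟨a, ha⟩
  have hdBtri : ∀ x y, dB x ≤ ν (x - y) + dB y := by
    intro x y
    have h : dB x - ν (x - y) ≤ dB y := by
      rw [hdB y]
      refine le_ciInf fun a => ?_
      have h1 : dB x ≤ ν (x - (a : Fin N → ℝ)) := hdBle x a a.2
      have h2 : ν (x - (a : Fin N → ℝ)) ≤ ν (x - y) + ν (y - (a : Fin N → ℝ)) := by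
        have := hνadd (x - y) (y - (a : Fin N → ℝ))
        rw [sub_add_sub_cancel] at this
        exact this
      linarith
    linarith
  have hdBcont : Continuous dB := by
    rw [continuous_iff_continuousAt]
    intro x₀
    have key : Tendsto (fun x => dB x - dB x₀) (nhds x₀) (nhds 0) := by
      apply squeeze_zero_norm (a := fun x => ν (x - x₀))
      · intro x
        rw [Real.norm_eq_abs, abs_sub_le_iff]
        constructor
        · linarith [hdBtri x x₀]
        · have h := hdBtri x₀ x
          have hyx : ν (x₀ - x) = ν (x - x₀) := by rw [← hνneg (x - x₀), neg_sub]
          rw [hyx] at h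
          linarith
      · have : Tendsto (fun x : Fin N → ℝ => x - x₀) (nhds x₀) (nhds 0) :=
          tendsto_sub_nhds_zero_iff.mpr tendsto_id
        simpa [hν00, Function.comp_def] using (hνcont.tendsto 0).comp this
    have := key.add (tendsto_const_nhds (x := dB x₀))
    simpa [ContinuousAt] using this
  have hΓeq : ∀ t, Γ t = closure Ω ∩ {x | dB x < t} := by
    intro t
    rw [hΓ]
    rfl
  have hΓmeas : ∀ t, MeasurableSet (Γ t) := by
    intro t
    rw [hΓeq]
    exact isClosed_closure.measurableSet.inter
      (measurableSet_lt hdBcont.measurable measurable_const)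
  have hΓmono : ∀ a b : ℝ, a ≤ b → Γ a ⊆ Γ b := by
    intro a b hab x hx
    rw [hΓeq] at hx ⊢
    exact ⟨hx.1, lt_of_lt_of_le hx.2 hab⟩
  -- Part 1: continuity
  have part1 : ∀ n, ContinuousOn (G n) (closure Ω) := by
    intro n
    have : ContinuousOn (fun x => max (F n x) 0 * χ n x + F n x * (1 - χ n x)) (closure Ω) :=
      (((hFc n).sup continuousOn_const).mul (hχc n)).add
        ((hFc n).mul (continuousOn_const.sub (hχc n)))
    exact this.congr fun x _ => hG n x
  -- Part 2: strong quasipositivity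
  have hBcl : B ⊆ closure Ω := by
    rw [hB]
    exact fun x hx => frontier_subset_closure hx.2
  have part2 : ∀ n, ∀ x ∈ B, 0 ≤ G n x := by
    intro n x hx
    have hdB0 : dB x ≤ 0 := by
      have := hdBle x x hx
      simpa [sub_self, hν00] using this
    have hxΓ : x ∈ Γ (ε n - δ n) := by
      rw [hΓ]
      refine ⟨hBcl hx, ?_⟩
      have := hpos n
      linarith [this.1, this.2]
    rw [hG, hχ1 n x hxΓ]
    simpa using le_max_right (F n x) 0
  refine ⟨part1, part2, ?_⟩
  -- Part 3: convergence
  obtain ⟨M, hM⟩ := hfbd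
  set M' : ℝ := max M 0 with hM'def
  have hM'0 : 0 ≤ M' := le_max_right _ _
  have hpne : p ≠ 0 := (lt_of_lt_of_le zero_lt_one hp1).ne'
  have hrpos : 0 < 1 / p.toReal := by
    have := ENNReal.toReal_pos hpne hptop
    positivity
  set r : ℝ := 1 / p.toReal with hrdef
  set t : ℕ → ℝ := fun n => ε n + δ n with htdef
  have ht0 : ∀ n, 0 < t n := fun n => by
    have := hpos n
    simp only [htdef]
    linarith [this.1, this.2]
  have htt : Tendsto t atTop (nhds 0) := by
    simpa using hε0.add hδ0
  have hts : ∀ᶠ n in atTop, t n < s := htt.eventually_lt_const hs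
  -- measurability
  have hfm : AEStronglyMeasurable f (volume.restrict Ω) :=
    (hfc.mono subset_closure).aestronglyMeasurable hΩmeas
  have hFm : ∀ n, AEStronglyMeasurable (F n) (volume.restrict Ω) := fun n =>
    ((hFc n).mono subset_closure).aestronglyMeasurable hΩmeas
  have hGm : ∀ n, AEStronglyMeasurable (G n) (volume.restrict Ω) := fun n =>
    ((part1 n).mono subset_closure).aestronglyMeasurable hΩmeas
  have hsubm : ∀ n, AEStronglyMeasurable (fun x => F n x - f x) (volume.restrict Ω) :=
    fun n => (hFm n).sub hfm
  set E : ℕ → ℝ≥0∞ := fun n => eLpNorm (fun x => F n x - f x) p (volume.restrict Ω) with hEdef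
  set C : ℕ → ℝ≥0∞ := fun n => (‖M'‖₊ : ℝ≥0∞) * volume (Γ (t n)) ^ r with hCdef
  -- key eventual bound
  have key : ∀ᶠ n in atTop, eLpNorm (fun x => G n x - f x) p (volume.restrict Ω)
      ≤ E n + (E n + C n) := by
    filter_upwards [hts] with n hns
    have hTΓs : Γ (t n) ⊆ Γ s := hΓmono _ _ hns.le
    set g1 : (Fin N → ℝ) → ℝ := fun x => |F n x - f x| with hg1def
    set ind : (Fin N → ℝ) → ℝ := (Γ (t n)).indicator (fun _ => M') with hinddef
    -- pointwise bound on Ω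
    have hbd : ∀ x ∈ Ω, ‖G n x - f x‖ ≤ ‖(g1 + (g1 + ind)) x‖ := by
      intro x hx
      have hxc : x ∈ closure Ω := subset_closure hx
      have hind0 : 0 ≤ ind x := Set.indicator_nonneg (fun _ _ => hM'0) x
      have habs : |max (F n x) 0 - F n x| ≤ |F n x| := by
        rcases le_total (F n x) 0 with h | h
        · rw [max_eq_right h, zero_sub, abs_neg]
        · rw [max_eq_left h, sub_self, abs_zero]
          exact abs_nonneg _
      have hGd : G n x - f x = (F n x - f x) + (max (F n x) 0 - F n x) * χ n x := by
        rw [hG]; ring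
      have hg1x : g1 x = |F n x - f x| := rfl
      have hrhs : ‖(g1 + (g1 + ind)) x‖ = g1 x + (g1 x + ind x) := by
        simp only [Pi.add_apply]
        rw [Real.norm_eq_abs, abs_of_nonneg]
        have := abs_nonneg (F n x - f x)
        rw [hg1x]
        linarith
      rw [hrhs, Real.norm_eq_abs, hGd, hg1x]
      by_cases hxT : x ∈ Γ (t n)
      · have hfx : |f x| ≤ M' := (hM x (hTΓs hxT)).trans (le_max_left _ _)
        have hχb := hχ01 n x hxc
        have h2 : |(max (F n x) 0 - F n x) * χ n x| ≤ |F n x| := by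
          rw [abs_mul]
          calc |max (F n x) 0 - F n x| * |χ n x| ≤ |F n x| * 1 := by
                apply mul_le_mul habs _ (abs_nonneg _) (abs_nonneg _)
                rw [abs_le]
                exact ⟨by linarith [hχb.1], hχb.2⟩
            _ = |F n x| := mul_one _
        have h3 : |F n x| ≤ |F n x - f x| + |f x| := by
          calc |F n x| = |(F n x - f x) + f x| := by ring_nf
            _ ≤ |F n x - f x| + |f x| := abs_add_le _ _
        have hindx : ind x = M' := Set.indicator_of_mem hxT _
        calc |(F n x - f x) + (max (F n x) 0 - F n x) * χ n x|
            ≤ |F n x - f x| + |(max (F n x) 0 - F n x) * χ n x| := abs_add_le _ _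
          _ ≤ |F n x - f x| + (|F n x - f x| + ind x) := by rw [hindx]; linarith
      · have hχx : χ n x = 0 := hχ0 n x ⟨hxc, hxT⟩
        have hindx : ind x = 0 := Set.indicator_of_notMem hxT _
        rw [hχx, mul_zero, add_zero, hindx, add_zero]
        linarith [abs_nonneg (F n x - f x)]
    have hbd' : ∀ᵐ x ∂(volume.restrict Ω), ‖G n x - f x‖ ≤ ‖(g1 + (g1 + ind)) x‖ :=
      (ae_restrict_mem hΩmeas).mono hbd
    have habsm : AEStronglyMeasurable g1 (volume.restrict Ω) := by
      rw [hg1def]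
      simpa [Real.norm_eq_abs] using (hsubm n).norm
    have hindm : AEStronglyMeasurable ind (volume.restrict Ω) :=
      (aestronglyMeasurable_const).indicator (hΓmeas _)
    have he1 : eLpNorm g1 p (volume.restrict Ω) = E n := by
      rw [hg1def, hEdef]
      simpa [Real.norm_eq_abs] using
        eLpNorm_norm (fun x => F n x - f x) (p := p) (μ := volume.restrict Ω)
    have he2 : eLpNorm ind p (volume.restrict Ω) ≤ C n := by
      rw [hinddef, eLpNorm_indicator_const (hΓmeas _) hpne hptop]
      simp only [hCdef]
      gcongr
      · exact (enorm_eq_nnnorm M').le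
      exact Measure.restrict_le_self
    calc eLpNorm (fun x => G n x - f x) p (volume.restrict Ω)
        ≤ eLpNorm (g1 + (g1 + ind)) p (volume.restrict Ω) := eLpNorm_mono_ae hbd'
      _ ≤ eLpNorm g1 p (volume.restrict Ω) + eLpNorm (g1 + ind) p (volume.restrict Ω) :=
          eLpNorm_add_le habsm (habsm.add hindm) hp1
      _ ≤ eLpNorm g1 p (volume.restrict Ω) +
          (eLpNorm g1 p (volume.restrict Ω) + eLpNorm ind p (volume.restrict Ω)) :=
          add_le_add_right (eLpNorm_add_le habsm hindm hp1) _
      _ ≤ E n + (E n + C n) := by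
          rw [he1]
          exact add_le_add_right (add_le_add_right he2 _) _
  -- convergence of the bound
  have hvol : Tendsto (fun n => volume (Γ (t n))) atTop (nhds 0) := by
    have h1 : ∀ᶠ n in atTop, (volume (Γ (t n))).toReal ≤ φ (t n) := by
      filter_upwards [hts] with n hns
      exact hφ (t n) (ht0 n).le hns
    have h2 : Tendsto (fun n => φ (t n)) atTop (nhds 0) := by
      have htw : Tendsto t atTop (nhdsWithin 0 (Set.Ici 0)) := by
        rw [tendsto_nhdsWithin_iff]
        exact ⟨htt, Eventually.of_forall fun n => (ht0 n).le⟩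
      have := hφrc.tendsto.comp htw
      rwa [hφ0] at this
    have h3 : Tendsto (fun n => (volume (Γ (t n))).toReal) atTop (nhds 0) :=
      tendsto_of_tendsto_of_tendsto_of_le_of_le' tendsto_const_nhds h2
        (Eventually.of_forall fun n => ENNReal.toReal_nonneg) h1
    have h4 : ∀ᶠ n in atTop, ENNReal.ofReal (volume (Γ (t n))).toReal = volume (Γ (t n)) := by
      filter_upwards [hts] with n hns
      rw [ENNReal.ofReal_toReal]
      exact ((measure_mono (hΓmono _ _ hns.le)).trans_lt hΓsfin).ne
    have := ENNReal.tendsto_ofReal h3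
    rw [ENNReal.ofReal_zero] at this
    exact this.congr' h4
  have hC0 : Tendsto C atTop (nhds 0) := by
    have := (ENNReal.tendsto_const_mul_rpow_nhds_zero_of_pos
      (c := (‖M'‖₊ : ℝ≥0∞)) ENNReal.coe_ne_top hrpos).comp hvol
    exact this
  have hE0 : Tendsto E atTop (nhds 0) := hFconv
  have hrhs0 : Tendsto (fun n => E n + (E n + C n)) atTop (nhds 0) := by
    have := hE0.add (hE0.add hC0)
    simpa using this
  exact tendsto_of_tendsto_of_tendsto_of_le_of_le' tendsto_const_nhds hrhs0
    (Eventually.of_forall fun n => zero_le) key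
end

section
/- Define f : [0,∞) → [0,∞) by f(x) = √x for 0 ≤ x < 1 and f(x) = x² for x ≥ 1. Then for every N ∈ ℕ the set Γ_1 := {x ∈ [0,∞)^N : ∏_{n=1}^N f(x_n) ≤ 1} has finite N-dimensional Lebesgue measure. -/
open scoped BigOperators ENNReal NNReal
open MeasureTheory

/-- Lintegral of a product of one-variable functions over a pi space is the power. -/
lemma lintegral_pi_prod_pow (g : ℝ → ℝ≥0∞) (hg : Measurable g) :
    ∀ N : ℕ, ∫⁻ x : Fin N → ℝ, ∏ n, g (x n) = (∫⁻ y, g y) ^ N := by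
  intro N
  induction N with
  | zero =>
      simp [lintegral_const, volume_pi, Measure.pi_empty_univ]
  | succ n ih =>
      have h := (measurePreserving_piFinSuccAbove
        (fun _ : Fin (n + 1) => (volume : Measure ℝ)) 0).symm
      have hF : Measurable fun x : Fin (n + 1) → ℝ => ∏ m, g (x m) :=
        Finset.measurable_prod _ fun m _ => hg.comp (measurable_pi_apply m)
      calc ∫⁻ x : Fin (n + 1) → ℝ, ∏ m, g (x m)
          = ∫⁻ x : Fin (n + 1) → ℝ, ∏ m, g (x m)
            ∂(Measure.pi fun _ => (volume : Measure ℝ)) := by rw [← volume_pi]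
        _ = ∫⁻ z : ℝ × (Fin n → ℝ), ∏ m,
              g (((MeasurableEquiv.piFinSuccAbove (fun _ => ℝ) 0).symm z) m)
            ∂((volume : Measure ℝ).prod (Measure.pi fun _ => (volume : Measure ℝ))) :=
            (h.lintegral_comp hF).symm
        _ = ∫⁻ z : ℝ × (Fin n → ℝ), g z.1 * ∏ m, g (z.2 m)
            ∂((volume : Measure ℝ).prod (Measure.pi fun _ => (volume : Measure ℝ))) := by
            refine lintegral_congr fun z => ?_
            simp_rw [MeasurableEquiv.piFinSuccAbove_symm_apply, Fin.insertNthEquiv,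
              Fin.prod_univ_succ, Fin.insertNth_zero]
            simp [Fin.zero_succAbove]
        _ = (∫⁻ y, g y) * ∫⁻ x : Fin n → ℝ, ∏ m, g (x m)
            ∂(Measure.pi fun _ => (volume : Measure ℝ)) := by
            exact lintegral_prod_mul hg.aemeasurable
              (Finset.measurable_prod _ fun m _ =>
                hg.comp (measurable_pi_apply m)).aemeasurable
        _ = (∫⁻ y, g y) * (∫⁻ y, g y) ^ n := by rw [← volume_pi, ih]
        _ = (∫⁻ y, g y) ^ (n + 1) := by ring

/-- With `f(x) = √x` for `0 ≤ x < 1` and `f(x) = x²` for `x ≥ 1`, the set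
`Γ₁ = {x ∈ [0,∞)^N : ∏_n f(x_n) ≤ 1}` has finite `N`-dimensional Lebesgue measure. -/
theorem finite_measure_nonlinear_boundary_layer (N : ℕ)
    (f : ℝ → ℝ) (hf : ∀ x : ℝ, f x = if x < 1 then Real.sqrt x else x ^ 2) :
    volume {x : Fin N → ℝ | (∀ n, 0 ≤ x n) ∧ ∏ n, f (x n) ≤ 1} < ⊤ := by
  have hfeq : f = fun x => if x < 1 then Real.sqrt x else x ^ 2 := funext hf
  have hfm : Measurable f := by
    rw [hfeq]
    exact Measurable.ite (measurableSet_lt measurable_id measurable_const)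
      Real.continuous_sqrt.measurable (measurable_id.pow_const 2)
  have hfnonneg : ∀ x : ℝ, 0 ≤ x → 0 ≤ f x := by
    intro x hx
    rw [hf]
    split
    · exact Real.sqrt_nonneg x
    · positivity
  -- the majorant
  set g : ℝ → ℝ≥0∞ := fun x => if 0 ≤ x then (ENNReal.ofReal (f x))⁻¹ else 0 with hg_def
  have hgm : Measurable g :=
    Measurable.ite (measurableSet_le measurable_const measurable_id)
      (ENNReal.measurable_ofReal.comp hfm).inv measurable_const
  set S : Set (Fin N → ℝ) :=
    {x : Fin N → ℝ | (∀ n, 0 ≤ x n) ∧ ∏ n, f (x n) ≤ 1} with hS_def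
  -- pointwise lower bound on S
  have hpt : ∀ x ∈ S, (1 : ℝ≥0∞) ≤ ∏ n, g (x n) := by
    intro x hx
    obtain ⟨hx0, hxprod⟩ := hx
    have heq : ∀ n, g (x n) = (ENNReal.ofReal (f (x n)))⁻¹ := fun n => if_pos (hx0 n)
    simp_rw [heq]
    rw [← ENNReal.prod_inv_distrib (fun i _ j _ _ => Or.inr ENNReal.ofReal_ne_top),
      ← ENNReal.ofReal_prod_of_nonneg (fun n _ => hfnonneg _ (hx0 n)),
      ENNReal.one_le_inv]
    calc ENNReal.ofReal (∏ n, f (x n)) ≤ ENNReal.ofReal 1 :=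
          ENNReal.ofReal_le_ofReal hxprod
      _ = 1 := ENNReal.ofReal_one
  -- measure bound via lintegral
  have hle : volume S ≤ ∫⁻ x : Fin N → ℝ, ∏ n, g (x n) := by
    calc volume S = ∫⁻ _ in S, 1 := (setLIntegral_one S).symm
      _ ≤ ∫⁻ x in S, ∏ n, g (x n) :=
          setLIntegral_mono (Finset.measurable_prod _ fun m _ =>
            hgm.comp (measurable_pi_apply m)) hpt
      _ ≤ ∫⁻ x : Fin N → ℝ, ∏ n, g (x n) := setLIntegral_le_lintegral _ _
  rw [lintegral_pi_prod_pow g hgm N] at hle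
  set F : ℝ → ℝ≥0∞ := (Set.Ioo (0 : ℝ) 1).indicator
        (fun x => ENNReal.ofReal (x ^ (-(1/2) : ℝ)))
      + (Set.Ici (1 : ℝ)).indicator (fun x => ENNReal.ofReal (x ^ (-2 : ℝ))) with hF_def
  -- finiteness of the one-dimensional integral
  have hone : ∫⁻ y, g y < ⊤ := by
    have hae : ∀ᵐ x : ℝ, g x ≤ F x := by
      rw [MeasureTheory.ae_iff]
      refine measure_mono_null (fun x hx => ?_) (measure_singleton (0 : ℝ))
      simp only [Set.mem_setOf_eq, not_le] at hx
      by_contra hx0'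
      have hxne : x ≠ 0 := hx0'
      apply absurd hx
      push_neg
      rcases lt_or_ge x 0 with hneg | hpos
      · simp [hg_def, if_neg (not_le.mpr hneg)]
      have hx0 : 0 < x := lt_of_le_of_ne hpos (Ne.symm hxne)
      rcases lt_or_ge x 1 with hx1 | hx1
      · have hgx : g x = ENNReal.ofReal (x ^ (-(1/2) : ℝ)) := by
          rw [hg_def]
          simp only [if_pos hpos]
          rw [hf, if_pos hx1, Real.rpow_neg hx0.le, ← Real.sqrt_eq_rpow,
            ENNReal.ofReal_inv_of_pos (Real.sqrt_pos.2 hx0)]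
        calc g x = (Set.Ioo (0 : ℝ) 1).indicator
              (fun x => ENNReal.ofReal (x ^ (-(1/2) : ℝ))) x := by
              rw [Set.indicator_of_mem (Set.mem_Ioo.mpr ⟨hx0, hx1⟩), hgx]
          _ ≤ F x := by rw [hF_def]; exact le_add_of_le_of_nonneg le_rfl zero_le
      · have hsq : x ^ (-2 : ℝ) = (x ^ 2)⁻¹ := by
          rw [Real.rpow_neg hx0.le, show ((2:ℝ)) = ((2:ℕ):ℝ) by norm_num,
            Real.rpow_natCast]
        have hgx : g x = ENNReal.ofReal (x ^ (-2 : ℝ)) := by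
          rw [hg_def]
          simp only [if_pos hpos]
          rw [hf, if_neg (not_lt.mpr hx1), hsq,
            ENNReal.ofReal_inv_of_pos (by positivity)]
        calc g x = (Set.Ici (1 : ℝ)).indicator
              (fun x => ENNReal.ofReal (x ^ (-2 : ℝ))) x := by
              rw [Set.indicator_of_mem (Set.mem_Ici.mpr hx1), hgx]
          _ ≤ F x := by rw [hF_def]; exact le_add_of_nonneg_of_le zero_le le_rfl
    have hI1 : ∫⁻ x in Set.Ioo (0 : ℝ) 1, ENNReal.ofReal (x ^ (-(1/2) : ℝ)) < ⊤ := by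
      have : IntegrableOn (fun x : ℝ => x ^ (-(1/2) : ℝ)) (Set.Ioo (0 : ℝ) 1) :=
        (intervalIntegral.integrableOn_Ioo_rpow_iff one_pos).2 (by norm_num)
      exact this.lintegral_lt_top
    have hI2 : ∫⁻ x in Set.Ici (1 : ℝ), ENNReal.ofReal (x ^ (-2 : ℝ)) < ⊤ := by
      rw [setLIntegral_congr (Ioi_ae_eq_Ici (a := (1:ℝ))).symm]
      have h2 : IntegrableOn (fun x : ℝ => x ^ (-2 : ℝ)) (Set.Ioi (1 : ℝ)) :=
        (integrableOn_Ioi_rpow_iff one_pos).2 (by norm_num)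
      exact h2.lintegral_lt_top
    calc ∫⁻ y, g y ≤ ∫⁻ y, F y := lintegral_mono_ae hae
      _ < ⊤ := by
          have hm1 : Measurable fun x : ℝ =>
              (Set.Ioo (0:ℝ) 1).indicator (fun x => ENNReal.ofReal (x ^ (-(1/2) : ℝ))) x :=
            ((by fun_prop : Measurable fun x : ℝ => x ^ (-(1/2) : ℝ)).ennreal_ofReal).indicator
              measurableSet_Ioo
          simp only [hF_def, Pi.add_apply]
          rw [lintegral_add_left hm1,
            lintegral_indicator measurableSet_Ioo _,
            lintegral_indicator measurableSet_Ici _]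
          exact ENNReal.add_lt_top.2 ⟨hI1, hI2⟩
  calc volume S ≤ (∫⁻ y, g y) ^ N := hle
    _ < ⊤ := ENNReal.pow_lt_top hone
end
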